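/- arXiv:2202.00891 — 3 statements merged into one kernel-verified Lean document; each statement's English description precedes it below -/
import Mathlib

section
/- Let f : ℕ → Set ℝ be a sequence of nonempty subsets of the real numbers which is a nondeterministic fast Cauchy sequence, i.e. for all n, m ∈ ℕ, all x ∈ f n and all y ∈ f m one has |x − y| ≤ 2^(−(n+m)). Then there exists a real number x such that for every n ∈ ℕ and every y ∈ f n, |x − y| ≤ 2^(−n). -/
theorem nondet_fast_cauchy_has_limit
    (f : ℕ → Set ℝ) (hne : ∀ n, (f n).Nonempty)
    (hcauchy : ∀ n m : ℕ, ∀ x ∈ f n, ∀ y ∈ f m, |x - y| ≤ (2:ℝ) ^ (-(n + m : ℤ))) :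
    ∃ x : ℝ, ∀ n : ℕ, ∀ y ∈ f n, |x - y| ≤ (2:ℝ) ^ (-(n : ℤ)) := by
  choose g hg using hne
  have hbound : ∀ n m : ℕ, |g n - g m| ≤ (2:ℝ) ^ (-(n + m : ℤ)) := fun n m =>
    hcauchy n m (g n) (hg n) (g m) (hg m)
  -- g is Cauchy
  have hcs : CauchySeq g := by
    rw [Metric.cauchySeq_iff']
    intro ε hε
    obtain ⟨N, hN⟩ := exists_pow_lt_of_lt_one hε (by norm_num : (1/2 : ℝ) < 1)
    refine ⟨N, fun n hn => ?_⟩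
    have h1 : |g n - g N| ≤ (2:ℝ) ^ (-(n + N : ℤ)) := hbound n N
    have h2 : (2:ℝ) ^ (-(n + N : ℤ)) ≤ (2:ℝ) ^ (-(N : ℤ)) := by
      apply zpow_le_zpow_right₀ (by norm_num)
      omega
    have h3 : (2:ℝ) ^ (-(N : ℤ)) = (1/2 : ℝ) ^ N := by
      rw [zpow_neg, one_div, inv_pow, ← zpow_natCast]
    calc dist (g n) (g N) = |g n - g N| := Real.dist_eq _ _
      _ ≤ (2:ℝ) ^ (-(n + N : ℤ)) := h1
      _ ≤ (2:ℝ) ^ (-(N : ℤ)) := h2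
      _ = (1/2 : ℝ) ^ N := h3
      _ < ε := hN
  obtain ⟨x, hx⟩ := cauchySeq_tendsto_of_complete hcs
  refine ⟨x, fun n y hy => ?_⟩
  -- |x - y| ≤ 2^-n + ε for all ε > 0
  refine le_of_forall_pos_le_add fun ε hε => ?_
  obtain ⟨N, hN⟩ := Metric.tendsto_atTop.mp hx ε hε
  have h1 : |g N - y| ≤ (2:ℝ) ^ (-(N + n : ℤ)) := hcauchy N n (g N) (hg N) y hy
  have h2 : (2:ℝ) ^ (-(N + n : ℤ)) ≤ (2:ℝ) ^ (-(n : ℤ)) := by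
    apply zpow_le_zpow_right₀ (by norm_num)
    omega
  have h3 : dist (g N) x < ε := hN N le_rfl
  rw [Real.dist_eq] at h3
  calc |x - y| ≤ |x - g N| + |g N - y| := abs_sub_le _ _ _
    _ ≤ ε + (2:ℝ) ^ (-(n : ℤ)) := by
        rw [abs_sub_comm]
        exact add_le_add h3.le (h1.trans h2)
    _ = (2:ℝ) ^ (-(n : ℤ)) + ε := add_comm _ _
end

section
/- Let f : ℝ → ℝ be continuous, let a < b be reals with f a < 0 and f b > 0, and assume there is exactly one z with a < z < b and f z = 0. Then f ((2a + b)/3) < 0 or f ((a + 2b)/3) > 0. -/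
theorem trisection_step
    (f : ℝ → ℝ) (hf : Continuous f)
    (a b : ℝ) (hab : a < b) (hfa : f a < 0) (hfb : f b > 0)
    (huniq : ∃! z : ℝ, a < z ∧ z < b ∧ f z = 0) :
    f ((2 * a + b) / 3) < 0 ∨ f ((a + 2 * b) / 3) > 0 := by
  by_contra h
  push_neg at h
  obtain ⟨h1, h2⟩ := h
  set c1 := (2 * a + b) / 3 with hc1
  set c2 := (a + 2 * b) / 3 with hc2
  have hac1 : a < c1 := by rw [hc1]; linarith
  have hc1c2 : c1 < c2 := by rw [hc1, hc2]; linarith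
  have hc2b : c2 < b := by rw [hc2]; linarith
  have iv1 : (0 : ℝ) ∈ Set.Icc (f a) (f c1) := ⟨le_of_lt hfa, h1⟩
  have iv2 : (0 : ℝ) ∈ Set.Icc (f c2) (f b) := ⟨h2, le_of_lt hfb⟩
  obtain ⟨z1, hz1, hfz1⟩ := intermediate_value_Icc hac1.le hf.continuousOn iv1
  obtain ⟨z2, hz2, hfz2⟩ := intermediate_value_Icc hc2b.le hf.continuousOn iv2
  have haz1 : a < z1 := lt_of_le_of_ne hz1.1 (by rintro rfl; exact hfa.ne hfz1)
  have hz2b : z2 < b := lt_of_le_of_ne hz2.2 (by rintro rfl; exact hfb.ne' hfz2)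
  obtain ⟨z, -, hz⟩ := huniq
  have e1 := hz z1 ⟨haz1, lt_of_le_of_lt hz1.2 (hc1c2.trans hc2b), hfz1⟩
  have e2 := hz z2 ⟨lt_of_lt_of_le (hac1.trans hc1c2) hz2.1, hz2b, hfz2⟩
  have : z1 < z2 := lt_of_le_of_lt hz1.2 (lt_of_lt_of_le hc1c2 hz2.1)
  rw [e1, e2] at this
  exact lt_irrefl _ this
end

section
/- Define heron : ℝ → ℕ → ℝ by heron x 0 = 1 and heron x (n+1) = (heron x n + x / heron x n) / 2. Then for every real x with 1/4 ≤ x ≤ 2 and every n ∈ ℕ, |heron x n − √x| ≤ 2^(−2^n). -/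
noncomputable def heron (x : ℝ) : ℕ → ℝ
  | 0 => 1
  | n + 1 => (heron x n + x / heron x n) / 2

lemma heron_pos (x : ℝ) (hx : 0 < x) : ∀ n, 0 < heron x n
  | 0 => one_pos
  | n + 1 => by
    have h := heron_pos x hx n
    simp only [heron]
    positivity

theorem heron_quadratic_convergence
    (x : ℝ) (hx1 : 1 / 4 ≤ x) (hx2 : x ≤ 2) (n : ℕ) :
    |heron x n - Real.sqrt x| ≤ (2:ℝ) ^ (-(2 ^ n : ℤ)) := by
  have hx0 : (0:ℝ) < x := by linarith
  have hpos : ∀ m, 0 < heron x m := heron_pos x hx0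
  have hsq : Real.sqrt x * Real.sqrt x = x := Real.mul_self_sqrt hx0.le
  have hs_lb : (1:ℝ)/2 ≤ Real.sqrt x := by
    have : Real.sqrt (1/4) ≤ Real.sqrt x := Real.sqrt_le_sqrt hx1
    have h14 : Real.sqrt (1/4 : ℝ) = 1/2 := by
      rw [show (1:ℝ)/4 = (1/2)^2 by norm_num, Real.sqrt_sq (by norm_num)]
    linarith [h14 ▸ this]
  have hs_ub : Real.sqrt x ≤ 3/2 := by
    have h1 : Real.sqrt x ≤ Real.sqrt 2 := Real.sqrt_le_sqrt hx2
    have h2 : Real.sqrt 2 ≤ 3/2 := by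
      rw [show (3:ℝ)/2 = Real.sqrt ((3/2)^2) from (Real.sqrt_sq (by norm_num)).symm]
      apply Real.sqrt_le_sqrt; norm_num
    linarith
  have hge : ∀ m, (1:ℝ)/2 ≤ heron x m := by
    intro m
    cases m with
    | zero => norm_num [heron]
    | succ k =>
      have hk := hpos k
      have h1 : (2*Real.sqrt x - heron x k) * heron x k ≤ x := by
        nlinarith [sq_nonneg (heron x k - Real.sqrt x)]
      have h2 : 2*Real.sqrt x - heron x k ≤ x / heron x k := by
        rw [le_div_iff₀ hk]; exact h1
      simp only [heron]
      linarith
  induction n with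
  | zero =>
    have h : (2:ℝ)^(-(2^0:ℤ)) = 1/2 := by norm_num
    rw [h]
    simp only [heron]
    rw [abs_le]
    constructor <;> linarith
  | succ k ih =>
    have ha := hpos k
    have key : heron x (k+1) - Real.sqrt x
        = (heron x k - Real.sqrt x)^2 / (2 * heron x k) := by
      simp only [heron]
      field_simp
      ring_nf
      nlinarith [hsq]
    have hnum : (heron x k - Real.sqrt x)^2 ≤ ((2:ℝ)^(-(2^k:ℤ)))^2 := by
      rw [← sq_abs]
      exact pow_le_pow_left₀ (abs_nonneg _) ih 2
    have hden : (1:ℝ) ≤ 2 * heron x k := by have := hge k; linarith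
    have hfin : ((2:ℝ)^(-(2^k:ℤ)))^2 = (2:ℝ)^(-(2^(k+1):ℤ)) := by
      rw [sq, ← zpow_add₀ (two_ne_zero)]
      congr 1
      ring
    rw [key, abs_of_nonneg (div_nonneg (sq_nonneg _) (by linarith))]
    calc (heron x k - Real.sqrt x)^2 / (2 * heron x k)
        ≤ (heron x k - Real.sqrt x)^2 := div_le_self (sq_nonneg _) hden
      _ ≤ ((2:ℝ)^(-(2^k:ℤ)))^2 := hnum
      _ = _ := hfin
end
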